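/- Let d : V¹ ⊆ W¹ → W² be densely defined and closed with closed range, d* its adjoint, and β : W¹ → W¹, γ : W² → W² selfadjoint positive bounded isomorphisms. Given f ∈ W¹ and g ∈ Range(d) ⊆ W², the saddle-point system β w₀ − d* w₀* = f, d w₀ = g has a unique solution (w₀, w₀*) ∈ V¹ × (V₂* ∩ N(d*)^⊥). -/

import Mathlib

open scoped RealInnerProductSpace

set_option maxHeartbeats 2000000 in
set_option synthInstance.maxHeartbeats 400000 in
theorem stmt_15
    {W1 W2 : Type*} [NormedAddCommGroup W1] [InnerProductSpace ℝ W1] [CompleteSpace W1]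
    [NormedAddCommGroup W2] [InnerProductSpace ℝ W2] [CompleteSpace W2]
    (V1 : Submodule ℝ W1) (V2 : Submodule ℝ W2)
    (hV1 : Dense (V1 : Set W1)) (hV2 : Dense (V2 : Set W2))
    (d : V1 →ₗ[ℝ] W2) (dstar : V2 →ₗ[ℝ] W1)
    (hd : IsClosed {p : W1 × W2 | ∃ v : V1, (v : W1) = p.1 ∧ d v = p.2})
    (hrange : IsClosed (Set.range fun v : V1 => d v))
    (hadj : ∀ (u : V1) (us : V2), ⟪dstar us, (u : W1)⟫ = ⟪(us : W2), d u⟫)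
    (hadj_max : ∀ us : W2, (∃ y : W1, ∀ u : V1, ⟪y, (u : W1)⟫ = ⟪us, d u⟫) → us ∈ V2)
    (β : W1 ≃L[ℝ] W1) (γ : W2 ≃L[ℝ] W2)
    (hβsym : ∀ x y : W1, ⟪β x, y⟫ = ⟪x, β y⟫)
    (hγsym : ∀ x y : W2, ⟪γ x, y⟫ = ⟪x, γ y⟫)
    (cβ cγ : ℝ) (hcβ : 0 < cβ) (hcγ : 0 < cγ)
    (hβcoer : ∀ x : W1, cβ * ‖x‖ ^ 2 ≤ ⟪β x, x⟫)
    (hγcoer : ∀ x : W2, cγ * ‖x‖ ^ 2 ≤ ⟪γ x, x⟫)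
    (f : W1) (g : W2) (hg : ∃ v : V1, d v = g) :
    ∃! p : V1 × V2,
      (∀ z : V2, dstar z = 0 → ⟪(p.2 : W2), (z : W2)⟫ = 0) ∧
      β ((p.1 : W1)) - dstar p.2 = f ∧ d p.1 = g := by
  classical
  obtain ⟨vg, hvg⟩ := hg
  -- the kernel of d as a closed submodule of W1
  set K : Submodule ℝ W1 := (LinearMap.ker d).map V1.subtype with hK
  have hKmem : ∀ x : W1, x ∈ K ↔ ∃ v : V1, (v : W1) = x ∧ d v = 0 := by
    intro x
    constructor
    · rintro ⟨v, hv1, hv2⟩; exact ⟨v, hv2, hv1⟩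
    · rintro ⟨v, hv1, hv2⟩; exact ⟨v, hv2, hv1⟩
  have hKclosed : IsClosed (K : Set W1) := by
    have hset : (K : Set W1) =
        (fun x : W1 => (x, (0 : W2))) ⁻¹'
          {p : W1 × W2 | ∃ v : V1, (v : W1) = p.1 ∧ d v = p.2} := by
      ext x
      simp only [Set.mem_preimage, Set.mem_setOf_eq, SetLike.mem_coe, hKmem]
    rw [hset]
    exact hd.preimage (continuous_id.prodMk continuous_const)
  haveI : CompleteSpace K := hKclosed.completeSpace_coe
  -- the coercive bilinear form on K
  let Blin : K →ₗ[ℝ] K →ₗ[ℝ] ℝ :=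
    LinearMap.mk₂ ℝ (fun k z => ⟪β (k : W1), (z : W1)⟫)
      (fun m n z => by simp [inner_add_left])
      (fun c m z => by simp [inner_smul_left])
      (fun m n z => by simp [inner_add_right])
      (fun c m z => by simp [inner_smul_right])
  let B : K →L[ℝ] K →L[ℝ] ℝ := Blin.mkContinuous₂ ‖(β : W1 →L[ℝ] W1)‖ (fun k z => by
    have h1 : |⟪β (k : W1), (z : W1)⟫| ≤ ‖β (k : W1)‖ * ‖(z : W1)‖ :=
      abs_real_inner_le_norm _ _
    have h2 : ‖β (k : W1)‖ ≤ ‖(β : W1 →L[ℝ] W1)‖ * ‖(k : W1)‖ :=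
      (β : W1 →L[ℝ] W1).le_opNorm _
    calc ‖Blin k z‖ = |⟪β (k : W1), (z : W1)⟫| := rfl
      _ ≤ ‖β (k : W1)‖ * ‖(z : W1)‖ := h1
      _ ≤ (‖(β : W1 →L[ℝ] W1)‖ * ‖(k : W1)‖) * ‖(z : W1)‖ := by
          exact mul_le_mul_of_nonneg_right h2 (norm_nonneg _)
      _ = ‖(β : W1 →L[ℝ] W1)‖ * ‖k‖ * ‖z‖ := by rfl)
  have hBapp : ∀ k z : K, B k z = ⟪β (k : W1), (z : W1)⟫ := fun k z => rfl
  have hcoer : IsCoercive B := by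
    refine ⟨cβ, hcβ, fun u => ?_⟩
    have := hβcoer (u : W1)
    calc cβ * ‖u‖ * ‖u‖ = cβ * ‖(u : W1)‖ ^ 2 := by
          rw [mul_assoc, ← pow_two]; rfl
      _ ≤ ⟪β (u : W1), (u : W1)⟫ := this
      _ = B u u := (hBapp u u).symm
  -- solve for k ∈ K
  let w : K := K.orthogonalProjectionOnto (f - β (vg : W1))
  let k : K := hcoer.continuousLinearEquivOfBilin.symm w
  have hksolve : ∀ z : K, ⟪β (k : W1), (z : W1)⟫ = ⟪f - β (vg : W1), (z : W1)⟫ := by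
    intro z
    have h1 : ⟪hcoer.continuousLinearEquivOfBilin k, z⟫ = B k z :=
      hcoer.continuousLinearEquivOfBilin_apply k z
    rw [hcoer.continuousLinearEquivOfBilin.apply_symm_apply w] at h1
    have h2 : ⟪f - β (vg : W1) - (w : W1), (z : W1)⟫ = 0 :=
      K.starProjection_inner_eq_zero _ _ z.2
    have h3 : ⟪(w : W1), (z : W1)⟫ = ⟪f - β (vg : W1), (z : W1)⟫ := by
      have := inner_sub_left (𝕜 := ℝ) (f - β (vg : W1)) (w : W1) (z : W1)
      rw [h2] at this
      linarith [this]
    rw [hBapp, Submodule.coe_inner] at h1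
    rw [← h1]; exact h3
  -- choose vk in V1 representing k
  obtain ⟨vk, hvk0, hvk1⟩ := (hKmem (k : W1)).1 k.2
  set w0 : V1 := vg + vk with hw0
  set y : W1 := β (w0 : W1) - f with hy
  have hyK : ∀ z : K, ⟪y, (z : W1)⟫ = 0 := by
    intro z
    have h1 := hksolve z
    have : y = β (k : W1) - (f - β (vg : W1)) := by
      rw [hy, hw0]
      push_cast
      rw [map_add, hvk0]
      abel
    rw [this, inner_sub_left, h1, sub_self]
  -- the graph of d as a closed submodule of the L2 product
  let φ : WithLp 2 (W1 × W2) ≃L[ℝ] W1 × W2 := WithLp.prodContinuousLinearEquiv 2 ℝ W1 W2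
  set Γ : Submodule ℝ (WithLp 2 (W1 × W2)) :=
    Submodule.comap (φ : WithLp 2 (W1 × W2) →ₗ[ℝ] W1 × W2) (LinearMap.range (V1.subtype.prod d))
    with hΓ
  have hΓmem : ∀ p : WithLp 2 (W1 × W2),
      p ∈ Γ ↔ ∃ v : V1, (v : W1) = (φ p).1 ∧ d v = (φ p).2 := by
    intro p
    constructor
    · rintro ⟨v, hv⟩
      exact ⟨v, congrArg Prod.fst hv, congrArg Prod.snd hv⟩
    · rintro ⟨v, h1, h2⟩; exact ⟨v, Prod.ext h1 h2⟩
  have hΓclosed : IsClosed (Γ : Set (WithLp 2 (W1 × W2))) := by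
    have : (Γ : Set (WithLp 2 (W1 × W2))) =
        (φ : WithLp 2 (W1 × W2) → W1 × W2) ⁻¹'
          {p : W1 × W2 | ∃ v : V1, (v : W1) = p.1 ∧ d v = p.2} := by
      ext p
      simp only [Set.mem_preimage, Set.mem_setOf_eq, SetLike.mem_coe, hΓmem]
    rw [this]; exact hd.preimage φ.continuous
  haveI : CompleteSpace Γ := hΓclosed.completeSpace_coe
  -- the range of d as a closed submodule
  set R : Submodule ℝ W2 := LinearMap.range d with hR
  have hRclosed : IsClosed (R : Set W2) := by
    have : (R : Set W2) = Set.range fun v : V1 => d v := by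
      ext x; simp [hR, LinearMap.mem_range, Set.mem_range]
    rw [this]; exact hrange
  haveI : CompleteSpace R := hRclosed.completeSpace_coe
  -- the projection from the graph onto the range
  let π2 : Γ →L[ℝ] R := ((ContinuousLinearMap.snd ℝ W1 W2).comp
      ((φ : WithLp 2 (W1 × W2) →L[ℝ] W1 × W2).comp Γ.subtypeL)).codRestrict R
    (by rintro ⟨p, hp⟩
        obtain ⟨v, h1, h2⟩ := (hΓmem p).1 hp
        exact ⟨v, h2⟩)
  have hπ2app : ∀ q : Γ, ((π2 q : R) : W2) = (φ ((q : Γ) : WithLp 2 (W1 × W2))).2 :=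
    fun q => rfl
  have hπ2surj : ∀ r : R, ∃ q : Γ, π2 q = r := by
    rintro ⟨ww, hww⟩
    obtain ⟨v, hv⟩ := hww
    refine ⟨⟨φ.symm ((v : W1), d v), ?_⟩, ?_⟩
    · apply (hΓmem _).2
      refine ⟨v, ?_, ?_⟩ <;> rw [φ.apply_symm_apply]
    · apply Subtype.ext
      show (φ (φ.symm ((v : W1), d v))).2 = ww
      rw [φ.apply_symm_apply]; exact hv
  set K0 : Submodule ℝ Γ := LinearMap.ker (π2 : Γ →ₗ[ℝ] R) with hK0
  have hK0closed : IsClosed (K0 : Set Γ) := by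
    have : (K0 : Set Γ) = π2 ⁻¹' {0} := by
      ext q; simp [hK0, LinearMap.mem_ker]
    rw [this]; exact isClosed_singleton.preimage π2.continuous
  haveI : CompleteSpace K0 := hK0closed.completeSpace_coe
  set Γ' : Submodule ℝ Γ := K0ᗮ with hΓ'
  haveI : CompleteSpace Γ' := K0.isClosed_orthogonal.completeSpace_coe
  let π2' : Γ' →L[ℝ] R := π2.comp Γ'.subtypeL
  have hker : LinearMap.ker (π2' : Γ' →ₗ[ℝ] R) = ⊥ := by
    rw [Submodule.eq_bot_iff]
    rintro ⟨x, hx⟩ h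
    have hxK0 : x ∈ K0 := by
      have : π2 x = 0 := h
      simpa [hK0, LinearMap.mem_ker] using this
    have hzero : ⟪x, x⟫ = (0 : ℝ) := hx x hxK0
    have : x = 0 := inner_self_eq_zero.mp hzero
    exact Subtype.ext this
  have hsurj : LinearMap.range (π2' : Γ' →ₗ[ℝ] R) = ⊤ := by
    rw [LinearMap.range_eq_top]
    intro r
    obtain ⟨q, hq⟩ := hπ2surj r
    obtain ⟨q0, hq0, q1, hq1, hsum⟩ := K0.exists_add_mem_mem_orthogonal q
    refine ⟨⟨q1, hq1⟩, ?_⟩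
    have h0 : π2 q0 = 0 := hq0
    have : π2 q0 + π2 q1 = r := by rw [← map_add, ← hsum, hq]
    rw [h0, zero_add] at this
    exact this
  letI : NormedSpace ℝ Γ' := InnerProductSpace.toNormedSpace
  let e : Γ' ≃L[ℝ] R := ContinuousLinearEquiv.ofBijective (E := Γ') (F := R) (σ := RingHom.id ℝ) π2' hker hsurj
  -- the functional on R and its Riesz representative
  let S' : Γ' →L[ℝ] ℝ := (innerSL ℝ y).comp ((ContinuousLinearMap.fst ℝ W1 W2).comp
    ((φ : WithLp 2 (W1 × W2) →L[ℝ] W1 × W2).comp (Γ.subtypeL.comp Γ'.subtypeL)))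
  let ℓ : R →L[ℝ] ℝ := S'.comp e.symm.toContinuousLinearMap
  set us : R := (InnerProductSpace.toDual ℝ R).symm ℓ with hus_def
  have hus : ∀ ww : R, ⟪(us : W2), (ww : W2)⟫ = ℓ ww := by
    intro ww
    rw [← Submodule.coe_inner]
    exact InnerProductSpace.toDual_symm_apply
  have huskey : ∀ u : V1, ⟪(us : W2), d u⟫ = ⟪y, (u : W1)⟫ := by
    intro u
    have hdu : d u ∈ R := ⟨u, rfl⟩
    have h1 : ⟪(us : W2), d u⟫ = ℓ ⟨d u, hdu⟩ := hus ⟨d u, hdu⟩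
    set q : Γ' := e.symm ⟨d u, hdu⟩ with hq_def
    have hq : π2' q = ⟨d u, hdu⟩ := by
      have h := e.apply_symm_apply ⟨d u, hdu⟩
      rw [← h]; rfl
    have h2 : ℓ ⟨d u, hdu⟩ = ⟪y, (φ ((q : Γ) : WithLp 2 (W1 × W2))).1⟫ := rfl
    obtain ⟨v, hv1, hv2⟩ := (hΓmem _).1 (q : Γ).2
    have hdv : d v = d u := by
      have hs : ((π2' q : R) : W2) = (φ ((q : Γ) : WithLp 2 (W1 × W2))).2 := rfl
      rw [hq] at hs
      rw [hv2, ← hs]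
    have hmem : ((v - u : V1) : W1) ∈ K := (hKmem _).2 ⟨v - u, rfl, by simp [map_sub, hdv]⟩
    have h3 := hyK ⟨_, hmem⟩
    have h4 : ⟪y, ((v : W1) - (u : W1))⟫ = 0 := by
      simpa using h3
    rw [inner_sub_right, sub_eq_zero] at h4
    rw [h1, h2, ← hv1, h4]
  -- us lies in V2 and dstar us = y
  have husV2 : (us : W2) ∈ V2 := hadj_max _ ⟨y, fun u => (huskey u).symm⟩
  set w0s : V2 := ⟨(us : W2), husV2⟩ with hw0s
  have hdstar : dstar w0s = y := by
    have hz : ∀ u : V1, ⟪dstar w0s - y, (u : W1)⟫ = 0 := by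
      intro u
      rw [inner_sub_left, hadj u w0s]
      have : ((w0s : W2)) = (us : W2) := rfl
      rw [this, huskey u, sub_self]
    have := hV1.eq_zero_of_inner_left ℝ (x := dstar w0s - y) (fun v hv => hz ⟨v, hv⟩)
    exact sub_eq_zero.mp this
  -- orthogonality of us to the kernel of dstar
  have horth : ∀ z : V2, dstar z = 0 → ⟪(w0s : W2), (z : W2)⟫ = 0 := by
    intro z hz
    obtain ⟨v'', hv''⟩ := us.2
    have h1 : ⟪(w0s : W2), (z : W2)⟫ = ⟪(z : W2), d v''⟫ := by
      rw [real_inner_comm]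
      have : ((w0s : W2)) = d v'' := hv''.symm
      rw [this]
    rw [h1, ← hadj v'' z, hz, inner_zero_left]
  -- the solution
  refine ⟨(w0, w0s), ⟨horth, ?_, ?_⟩, ?_⟩
  · rw [hdstar, hy]; abel
  · rw [hw0, map_add, hvg, hvk1, add_zero]
  · -- uniqueness
    rintro ⟨u1, z1⟩ ⟨horth', heq', hdg'⟩
    have hw0eq : β ((w0 : W1)) - dstar w0s = f := by rw [hdstar, hy]; abel
    have hdw0 : d w0 = g := by rw [hw0, map_add, hvg, hvk1, add_zero]
    set uu : V1 := u1 - w0 with huu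
    set zz : V2 := z1 - w0s with hzz
    have hβu : β ((uu : W1)) = dstar zz := by
      have h1 : β ((u1 : W1)) - dstar z1 = β ((w0 : W1)) - dstar w0s := by
        rw [heq', hw0eq]
      have h2 : β ((u1 : W1)) - β ((w0 : W1)) = dstar z1 - dstar w0s := by
        linear_combination (norm := module) h1
      rw [huu, hzz, map_sub]
      push_cast
      rw [map_sub, h2]
    have hdu : d uu = 0 := by rw [huu, map_sub, hdg', hdw0, sub_self]
    have hinner : ⟪β ((uu : W1)), (uu : W1)⟫ = 0 := by
      rw [hβu, hadj uu zz, hdu, inner_zero_right]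
    have hu0 : (uu : W1) = 0 := by
      have := hβcoer (uu : W1)
      rw [hinner] at this
      have hn : ‖(uu : W1)‖ ^ 2 ≤ 0 := by
        nlinarith
      have : ‖(uu : W1)‖ = 0 := by
        nlinarith [sq_nonneg ‖(uu : W1)‖, norm_nonneg (uu : W1)]
      exact norm_eq_zero.mp this
    have huu0 : uu = 0 := by exact_mod_cast Subtype.ext hu0
    have hdz : dstar zz = 0 := by
      rw [← hβu, hu0, map_zero]
    have hz0 : zz = 0 := by
      have h1 : ⟪(z1 : W2), (zz : W2)⟫ = 0 := horth' zz hdz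
      have h2 : ⟪(w0s : W2), (zz : W2)⟫ = 0 := horth zz hdz
      have h3 : ⟪(zz : W2), (zz : W2)⟫ = 0 := by
        have : ((zz : V2) : W2) = (z1 : W2) - (w0s : W2) := by
          rw [hzz]; push_cast; ring
        rw [this, inner_sub_left, ← this, h1, h2, sub_zero]
      have : ((zz : V2) : W2) = 0 := inner_self_eq_zero.mp h3
      exact Subtype.ext this
    have h1 : u1 = w0 := by
      have := sub_eq_zero.mp huu0
      exact this
    have h2 : z1 = w0s := sub_eq_zero.mp hz0
    exact Prod.ext h1 h2
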